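/- arXiv:2112.05169 — 3 statements merged into one kernel-verified Lean document; each statement's English description precedes it below -/
import Mathlib

section
/- Let x = x₀ + ι(x̲) and s = s₀ + ι(s̲) be paravectors in the real Clifford algebra ℝ_n with s ∉ [x]. Then both elements x² - 2s₀·x + (s₀² + ‖s̲‖²) and s² - 2x₀·s + (x₀² + ‖x̲‖²) are units in ℝ_n, and the two forms of the left slice monogenic Cauchy kernel agree: -(x² - 2s₀·x + (s₀² + ‖s̲‖²))⁻¹·(x - s̄) = (s - x̄)·(s² - 2x₀·s + (x₀² + ‖x̲‖²))⁻¹. -/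
noncomputable section

open CliffordAlgebra

section aux

variable {R : Type*} [Ring R] [Algebra ℝ R]

lemma para_conj (x₀ s₀ a b : ℝ) (p : R) (hp : p * p = (-a) • (1:R)) :
    ((x₀•(1:R)+p)*(x₀•(1:R)+p) - (2*s₀)•(x₀•(1:R)+p) + (s₀^2+b)•(1:R)) *
      (((x₀-s₀)^2 + b - a)•(1:R) - (2*(x₀-s₀))•p)
      = (((x₀-s₀)^2+b-a)^2 + 4*(x₀-s₀)^2*a) • (1:R) ∧
    (((x₀-s₀)^2 + b - a)•(1:R) - (2*(x₀-s₀))•p) *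
      ((x₀•(1:R)+p)*(x₀•(1:R)+p) - (2*s₀)•(x₀•(1:R)+p) + (s₀^2+b)•(1:R))
      = (((x₀-s₀)^2+b-a)^2 + 4*(x₀-s₀)^2*a) • (1:R) := by
  constructor <;>
  · simp only [mul_add, add_mul, mul_sub, sub_mul, smul_mul_assoc, mul_smul_comm, hp,
      smul_smul, one_mul, mul_one]
    match_scalars <;> ring

lemma para_key (x₀ s₀ a b : ℝ) (p q : R)
    (hp : p * p = (-a) • (1:R)) (hq : q * q = (-b) • (1:R)) :
    ((x₀•(1:R)+p)*(x₀•(1:R)+p) - (2*s₀)•(x₀•(1:R)+p) + (s₀^2+b)•(1:R)) *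
      ((s₀•(1:R)+q) - (x₀•(1:R)-p))
    = -(((x₀•(1:R)+p) - (s₀•(1:R)-q)) *
        ((s₀•(1:R)+q)*(s₀•(1:R)+q) - (2*x₀)•(s₀•(1:R)+q) + (x₀^2+a)•(1:R))) := by
  simp only [mul_add, add_mul, mul_sub, sub_mul, smul_mul_assoc, mul_smul_comm, hp, hq,
    smul_smul, one_mul, mul_one]
  match_scalars <;> ring

lemma para_N_ne (x₀ s₀ a b : ℝ) (ha : 0 ≤ a) (hb : 0 ≤ b) (h : ¬(s₀ = x₀ ∧ b = a)) :
    (((x₀-s₀)^2+b-a)^2 + 4*(x₀-s₀)^2*a) ≠ 0 := by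
  intro h0
  have h1 : (x₀-s₀)^2+b-a = 0 := by nlinarith [sq_nonneg ((x₀-s₀)^2+b-a), sq_nonneg (x₀-s₀)]
  have h2 : (x₀-s₀)^2*a = 0 := by nlinarith [sq_nonneg ((x₀-s₀)^2+b-a), sq_nonneg (x₀-s₀)]
  rcases mul_eq_zero.mp h2 with h3 | h3
  · have : x₀ - s₀ = 0 := by nlinarith [sq_nonneg (x₀-s₀)]
    exact h ⟨by linarith, by nlinarith⟩
  · subst h3
    have : x₀ - s₀ = 0 := by nlinarith [sq_nonneg (x₀-s₀)]
    exact h ⟨by linarith, by nlinarith⟩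

end aux

/-- The quadratic form `Q(v) = -‖v‖²` on `ℝⁿ`, whose Clifford algebra is `ℝ_n`. -/
def cliffordQ (n : ℕ) : QuadraticForm ℝ (EuclideanSpace ℝ (Fin n)) :=
  -LinearMap.BilinMap.toQuadraticMap (innerₗ (EuclideanSpace ℝ (Fin n)))

/-- For paravectors `x = x₀ + ι x̲` and `s = s₀ + ι s̲` in the real Clifford
algebra `ℝ_n` with `s ∉ [x]`, both `x² - 2s₀·x + (s₀² + ‖s̲‖²)` and
`s² - 2x₀·s + (x₀² + ‖x̲‖²)` are units, and the two forms of the left slice monogenic Cauchy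
kernel agree:
`-(x² - 2s₀·x + (s₀² + ‖s̲‖²))⁻¹ · (x - s̄) = (s - x̄) · (s² - 2x₀·s + (x₀² + ‖x̲‖²))⁻¹`. -/
theorem left_cauchy_kernel_two_forms (n : ℕ) (hn : 1 ≤ n)
    (x₀ s₀ : ℝ) (xv sv : EuclideanSpace ℝ (Fin n))
    (hsx : (s₀, ‖sv‖) ≠ (x₀, ‖xv‖)) :
    let ιQ := CliffordAlgebra.ι (cliffordQ n)
    let x : CliffordAlgebra (cliffordQ n) := algebraMap ℝ _ x₀ + ιQ xv
    let s : CliffordAlgebra (cliffordQ n) := algebraMap ℝ _ s₀ + ιQ sv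
    let xbar : CliffordAlgebra (cliffordQ n) := algebraMap ℝ _ x₀ - ιQ xv
    let sbar : CliffordAlgebra (cliffordQ n) := algebraMap ℝ _ s₀ - ιQ sv
    let A : CliffordAlgebra (cliffordQ n) :=
      x ^ 2 - (2 * s₀) • x + algebraMap ℝ _ (s₀ ^ 2 + ‖sv‖ ^ 2)
    let B : CliffordAlgebra (cliffordQ n) :=
      s ^ 2 - (2 * x₀) • s + algebraMap ℝ _ (x₀ ^ 2 + ‖xv‖ ^ 2)
    IsUnit A ∧ IsUnit B ∧
      -(Ring.inverse A * (x - sbar)) = (s - xbar) * Ring.inverse B := by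
  intro ιQ x s xbar sbar A B
  have hQ : ∀ v : EuclideanSpace ℝ (Fin n), cliffordQ n v = -‖v‖^2 := by
    intro v
    rw [cliffordQ, QuadraticMap.neg_apply, LinearMap.BilinMap.toQuadraticMap_apply,
      innerₗ_apply_apply, real_inner_self_eq_norm_sq]
  have hp : ιQ xv * ιQ xv = (-‖xv‖^2) • (1 : CliffordAlgebra (cliffordQ n)) := by
    rw [show ιQ xv * ιQ xv = algebraMap ℝ _ (cliffordQ n xv) from ι_sq_scalar _ xv,
      hQ, Algebra.algebraMap_eq_smul_one]
  have hq : ιQ sv * ιQ sv = (-‖sv‖^2) • (1 : CliffordAlgebra (cliffordQ n)) := by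
    rw [show ιQ sv * ιQ sv = algebraMap ℝ _ (cliffordQ n sv) from ι_sq_scalar _ sv,
      hQ, Algebra.algebraMap_eq_smul_one]
  have hxeq : x = x₀•(1:CliffordAlgebra (cliffordQ n)) + ιQ xv := by
    simp only [x, Algebra.algebraMap_eq_smul_one]
  have hseq : s = s₀•(1:CliffordAlgebra (cliffordQ n)) + ιQ sv := by
    simp only [s, Algebra.algebraMap_eq_smul_one]
  have hxbar : xbar = x₀•(1:CliffordAlgebra (cliffordQ n)) - ιQ xv := by
    simp only [xbar, Algebra.algebraMap_eq_smul_one]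
  have hsbar : sbar = s₀•(1:CliffordAlgebra (cliffordQ n)) - ιQ sv := by
    simp only [sbar, Algebra.algebraMap_eq_smul_one]
  have hAeq : A = (x₀•(1:CliffordAlgebra (cliffordQ n)) + ιQ xv)*(x₀•1 + ιQ xv)
      - (2*s₀)•(x₀•1 + ιQ xv) + (s₀^2+‖sv‖^2)•1 := by
    simp only [A, hxeq, sq, Algebra.algebraMap_eq_smul_one]
  have hBeq : B = (s₀•(1:CliffordAlgebra (cliffordQ n)) + ιQ sv)*(s₀•1 + ιQ sv)
      - (2*x₀)•(s₀•1 + ιQ sv) + (x₀^2+‖xv‖^2)•1 := by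
    simp only [B, hseq, sq, Algebra.algebraMap_eq_smul_one]
  have hnsx : ¬(s₀ = x₀ ∧ ‖sv‖^2 = ‖xv‖^2) := by
    rintro ⟨h1, h2⟩
    apply hsx
    have h3 : (‖sv‖ - ‖xv‖) * (‖sv‖ + ‖xv‖) = 0 := by nlinarith
    have h5 : ‖sv‖ = ‖xv‖ := by
      rcases mul_eq_zero.mp h3 with h4 | h4
      · linarith
      · have := norm_nonneg sv; have := norm_nonneg xv; linarith
    rw [h1, h5]
  have hnxs : ¬(x₀ = s₀ ∧ ‖xv‖^2 = ‖sv‖^2) := fun ⟨h1, h2⟩ => hnsx ⟨h1.symm, h2.symm⟩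
  have hNA : (((x₀-s₀)^2+‖sv‖^2-‖xv‖^2)^2 + 4*(x₀-s₀)^2*‖xv‖^2) ≠ 0 :=
    para_N_ne x₀ s₀ (‖xv‖^2) (‖sv‖^2) (by positivity) (by positivity) hnsx
  have hNB : (((s₀-x₀)^2+‖xv‖^2-‖sv‖^2)^2 + 4*(s₀-x₀)^2*‖sv‖^2) ≠ 0 :=
    para_N_ne s₀ x₀ (‖sv‖^2) (‖xv‖^2) (by positivity) (by positivity) hnxs
  obtain ⟨hA1, hA2⟩ := para_conj x₀ s₀ (‖xv‖^2) (‖sv‖^2) (ιQ xv) hp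
  obtain ⟨hB1, hB2⟩ := para_conj s₀ x₀ (‖sv‖^2) (‖xv‖^2) (ιQ sv) hq
  set invA : CliffordAlgebra (cliffordQ n) :=
    (((x₀-s₀)^2+‖sv‖^2-‖xv‖^2)^2 + 4*(x₀-s₀)^2*‖xv‖^2)⁻¹ •
      (((x₀-s₀)^2 + ‖sv‖^2 - ‖xv‖^2)•1 - (2*(x₀-s₀))•ιQ xv) with hinvAdef
  set invB : CliffordAlgebra (cliffordQ n) :=
    (((s₀-x₀)^2+‖xv‖^2-‖sv‖^2)^2 + 4*(s₀-x₀)^2*‖sv‖^2)⁻¹ •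
      (((s₀-x₀)^2 + ‖xv‖^2 - ‖sv‖^2)•1 - (2*(s₀-x₀))•ιQ sv) with hinvBdef
  have hAr : A * invA = 1 := by
    rw [hinvAdef, mul_smul_comm, hAeq, hA1, smul_smul, inv_mul_cancel₀ hNA, one_smul]
  have hAl : invA * A = 1 := by
    rw [hinvAdef, smul_mul_assoc, hAeq, hA2, smul_smul, inv_mul_cancel₀ hNA, one_smul]
  have hBr : B * invB = 1 := by
    rw [hinvBdef, mul_smul_comm, hBeq, hB1, smul_smul, inv_mul_cancel₀ hNB, one_smul]
  have hBl : invB * B = 1 := by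
    rw [hinvBdef, smul_mul_assoc, hBeq, hB2, smul_smul, inv_mul_cancel₀ hNB, one_smul]
  have uA : (CliffordAlgebra (cliffordQ n))ˣ := ⟨A, invA, hAr, hAl⟩
  refine ⟨⟨⟨A, invA, hAr, hAl⟩, rfl⟩, ⟨⟨B, invB, hBr, hBl⟩, rfl⟩, ?_⟩
  have hRA : Ring.inverse A = invA :=
    Ring.inverse_unit ⟨A, invA, hAr, hAl⟩
  have hRB : Ring.inverse B = invB :=
    Ring.inverse_unit ⟨B, invB, hBr, hBl⟩
  rw [hRA, hRB]
  have hkey : A * (s - xbar) = -((x - sbar) * B) := by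
    rw [hAeq, hBeq, hseq, hxbar, hxeq, hsbar]
    exact para_key x₀ s₀ (‖xv‖^2) (‖sv‖^2) (ιQ xv) (ιQ sv) hp hq
  rw [eq_comm]
  calc (s - xbar) * invB = (invA * A) * ((s - xbar) * invB) := by rw [hAl, one_mul]
    _ = invA * ((A * (s - xbar)) * invB) := by noncomm_ring
    _ = invA * (-((x - sbar) * B) * invB) := by rw [hkey]
    _ = -(invA * ((x - sbar) * (B * invB))) := by noncomm_ring
    _ = -(invA * (x - sbar)) := by rw [hBr, mul_one]


end
end

section
/- Let n ≥ 1, let s ∈ ℝ, let h ∈ ℕ, and let U = {x ∈ ℝ^{n+1} : x ≠ (s,0,…,0)}. Set Q(x) = (s - x₀)² + Σ_{i=1}^n x_i² and let Δ = Σ_{i=0}^n ∂²/∂x_i² denote the Laplace operator on ℝ^{n+1}. Then on U the h-fold iterate of Δ satisfies Δ^h[(s - x₀)·Q(x)^{-1}] = C_{n,h}·(s - x₀)·Q(x)^{-(h+1)} and, for every j ∈ {1,…,n}, Δ^h[x_j·Q(x)^{-1}] = C_{n,h}·x_j·Q(x)^{-(h+1)}, where C_{n,h} = (-1)^h · ∏_{ℓ=1}^h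 (2ℓ) · ∏_{ℓ=1}^h (n - (2ℓ - 1)). (These are the components of the identity Δ^h S_L^{-1}(s,x) = C_{n,h}(s - x̄)(s² - 2Re(x)s + |x|²)^{-(h+1)} for real s.) -/
noncomputable section

open Finset

/-- Partial derivative of `f : ℝ^{m} → ℝ` in the `i`-th coordinate direction. -/
def pderiv' {m : ℕ} (i : Fin m) (f : (Fin m → ℝ) → ℝ) : (Fin m → ℝ) → ℝ :=
  fun x => fderiv ℝ f x (Pi.single i 1)

/-- The Laplace operator `Δ = Σ_i ∂²/∂x_i²` on functions `ℝ^{m} → ℝ`. -/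
def laplacian' {m : ℕ} (f : (Fin m → ℝ) → ℝ) : (Fin m → ℝ) → ℝ :=
  fun x => ∑ i : Fin m, pderiv' i (pderiv' i f) x

variable {N : ℕ}

def Qf (c : Fin N → ℝ) : (Fin N → ℝ) → ℝ := fun y => ∑ i, (y i - c i) ^ 2

def dQ (c x : Fin N → ℝ) : (Fin N → ℝ) →L[ℝ] ℝ :=
  ∑ i, (2 * (x i - c i)) • (ContinuousLinearMap.proj i : (Fin N → ℝ) →L[ℝ] ℝ)

lemma hasFDerivAt_Q (c x : Fin N → ℝ) : HasFDerivAt (Qf c) (dQ c x) x := by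
  have h : ∀ i : Fin N, HasFDerivAt (fun y : Fin N → ℝ => (y i - c i) ^ 2)
      ((2 * (x i - c i)) • (ContinuousLinearMap.proj i : (Fin N → ℝ) →L[ℝ] ℝ)) x := by
    intro i
    have h1 : HasFDerivAt (fun y : Fin N → ℝ => y i - c i)
        (ContinuousLinearMap.proj i : (Fin N → ℝ) →L[ℝ] ℝ) x :=
      (ContinuousLinearMap.proj i : (Fin N → ℝ) →L[ℝ] ℝ).hasFDerivAt.sub_const (c i)
    have h2 := (hasDerivAt_pow 2 (x i - c i)).comp_hasFDerivAt x h1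
    simpa [Function.comp_def] using h2
  exact HasFDerivAt.fun_sum (fun i _ => h i)

lemma dQ_apply (c x : Fin N → ℝ) (k : Fin N) : dQ c x (Pi.single k 1) = 2 * (x k - c k) := by
  simp [dQ, ContinuousLinearMap.sum_apply, Pi.single_apply]

lemma hasFDerivAt_Qinv (c x : Fin N → ℝ) (p : ℕ) (hx : Qf c x ≠ 0) :
    HasFDerivAt (fun y => ((Qf c y) ^ (p + 1))⁻¹)
      ((-((p+1 : ℝ) * Qf c x ^ p) / (Qf c x ^ (p+1)) ^ 2) • dQ c x) x := by
  have hg : HasDerivAt (fun t : ℝ => (t ^ (p+1))⁻¹)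
      (-((p+1 : ℝ) * Qf c x ^ p) / (Qf c x ^ (p+1)) ^ 2) (Qf c x) := by
    have h1 : HasDerivAt (fun t : ℝ => t ^ (p+1)) ((p+1 : ℝ) * Qf c x ^ p) (Qf c x) := by
      simpa using hasDerivAt_pow (p+1) (Qf c x)
    exact h1.inv (pow_ne_zero _ hx)
  exact hg.comp_hasFDerivAt x (hasFDerivAt_Q c x)

lemma proj_hasFDerivAt (j : Fin N) (x : Fin N → ℝ) (c : Fin N → ℝ) :
    HasFDerivAt (fun y : Fin N → ℝ => y j - c j)
      (ContinuousLinearMap.proj j : (Fin N → ℝ) →L[ℝ] ℝ) x :=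
  (ContinuousLinearMap.proj j : (Fin N → ℝ) →L[ℝ] ℝ).hasFDerivAt.sub_const (c j)

lemma pderiv_F (c x : Fin N → ℝ) (j k : Fin N) (p : ℕ) (a : ℝ) (hx : Qf c x ≠ 0) :
    pderiv' k (fun y => a * ((y j - c j) * ((Qf c y) ^ (p + 1))⁻¹)) x
      = (a * (if j = k then (1:ℝ) else 0)) * ((Qf c x) ^ (p+1))⁻¹
        - (2*(p+1:ℝ)*a) * ((x j - c j) * ((x k - c k) * ((Qf c x) ^ (p+2))⁻¹)) := by
  have hF := ((proj_hasFDerivAt j x c).fun_mul (hasFDerivAt_Qinv c x p hx)).const_mul a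
  rw [pderiv', hF.fderiv]
  simp only [ContinuousLinearMap.add_apply, ContinuousLinearMap.smul_apply,
    ContinuousLinearMap.proj_apply, dQ_apply, smul_eq_mul, Pi.single_apply]
  generalize (if j = k then (1:ℝ) else 0) = d
  field_simp
  ring

lemma pderiv_G (c x : Fin N → ℝ) (j k : Fin N) (p : ℕ) (a : ℝ) (hx : Qf c x ≠ 0) :
    pderiv' k (fun y =>
        (a * (if j = k then (1:ℝ) else 0)) * ((Qf c y) ^ (p+1))⁻¹
        - (2*(p+1:ℝ)*a) * ((y j - c j) * ((y k - c k) * ((Qf c y) ^ (p+2))⁻¹))) x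
      = (-4*(p+1:ℝ)*a * ((Qf c x) ^ (p+2))⁻¹) * ((if j = k then (1:ℝ) else 0) * (x k - c k))
        + (-(2*(p+1:ℝ)*a) * (x j - c j) * ((Qf c x) ^ (p+2))⁻¹
          + (4*(p+1:ℝ)*(p+2)*a*(x j - c j) * ((Qf c x) ^ (p+3))⁻¹) * (x k - c k)^2) := by
  have h1 : HasFDerivAt (fun y : Fin N → ℝ =>
      (a * (if j = k then (1:ℝ) else 0)) * ((Qf c y) ^ (p+1))⁻¹)
      ((a * (if j = k then (1:ℝ) else 0)) •
        ((-((p+1 : ℝ) * Qf c x ^ p) / (Qf c x ^ (p+1)) ^ 2) • dQ c x)) x :=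
    (hasFDerivAt_Qinv c x p hx).const_mul _
  have h2inner : HasFDerivAt (fun y : Fin N → ℝ => (y k - c k) * ((Qf c y) ^ (p+2))⁻¹)
      ((x k - c k) • ((-((p+2 : ℝ) * Qf c x ^ (p+1)) / (Qf c x ^ (p+2)) ^ 2) • dQ c x)
        + ((Qf c x ^ (p+2))⁻¹) • (ContinuousLinearMap.proj k : (Fin N → ℝ) →L[ℝ] ℝ)) x := by
    have := (proj_hasFDerivAt k x c).fun_mul (hasFDerivAt_Qinv c x (p+1) hx)
    refine this.congr_fderiv ?_
    congr 2
    push_cast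
    ring_nf
  have h2 := (((proj_hasFDerivAt j x c).fun_mul h2inner).const_mul (2*(p+1:ℝ)*a))
  have hF := h1.fun_sub h2
  rw [pderiv', hF.fderiv]
  simp only [ContinuousLinearMap.add_apply, ContinuousLinearMap.smul_apply,
    ContinuousLinearMap.sub_apply, ContinuousLinearMap.proj_apply, dQ_apply, smul_eq_mul,
    Pi.single_apply]
  simp only [eq_self_iff_true, if_true]
  generalize (if j = k then (1:ℝ) else 0) = d
  field_simp
  ring

lemma continuous_Qf (c : Fin N → ℝ) : Continuous (Qf c) :=
  continuous_finset_sum _ fun i _ => ((continuous_apply i).sub continuous_const).pow 2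

lemma isOpen_U (c : Fin N → ℝ) : IsOpen {y : Fin N → ℝ | Qf c y ≠ 0} :=
  IsOpen.preimage (continuous_Qf c) isOpen_compl_singleton

lemma laplacian_F (c x : Fin N → ℝ) (j : Fin N) (p : ℕ) (a : ℝ) (hx : Qf c x ≠ 0) :
    laplacian' (fun y => a * ((y j - c j) * ((Qf c y) ^ (p + 1))⁻¹)) x
      = (2*(p+1:ℝ)*(2*(p+1) - N) * a) * ((x j - c j) * ((Qf c x) ^ (p+2))⁻¹) := by
  have hmem : {y : Fin N → ℝ | Qf c y ≠ 0} ∈ nhds x := (isOpen_U c).mem_nhds hx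
  have hstep : ∀ k : Fin N,
      pderiv' k (pderiv' k (fun y => a * ((y j - c j) * ((Qf c y) ^ (p + 1))⁻¹))) x
        = (-4*(p+1:ℝ)*a * ((Qf c x) ^ (p+2))⁻¹) * ((if j = k then (1:ℝ) else 0) * (x k - c k))
          + (-(2*(p+1:ℝ)*a) * (x j - c j) * ((Qf c x) ^ (p+2))⁻¹
            + (4*(p+1:ℝ)*(p+2)*a*(x j - c j) * ((Qf c x) ^ (p+3))⁻¹) * (x k - c k)^2) := by
    intro k
    have hEv : pderiv' k (fun y => a * ((y j - c j) * ((Qf c y) ^ (p + 1))⁻¹))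
        =ᶠ[nhds x] fun y =>
          (a * (if j = k then (1:ℝ) else 0)) * ((Qf c y) ^ (p+1))⁻¹
          - (2*(p+1:ℝ)*a) * ((y j - c j) * ((y k - c k) * ((Qf c y) ^ (p+2))⁻¹)) := by
      filter_upwards [hmem] with y hy
      exact pderiv_F c y j k p a hy
    have h2 := Filter.EventuallyEq.fderiv_eq (𝕜 := ℝ) hEv
    rw [pderiv', h2, ← pderiv', pderiv_G c x j k p a hx]
  rw [laplacian']
  rw [Finset.sum_congr rfl fun k _ => hstep k]
  rw [Finset.sum_add_distrib]
  have s1 : ∑ k : Fin N, (-4*(p+1:ℝ)*a * ((Qf c x) ^ (p+2))⁻¹) *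
      ((if j = k then (1:ℝ) else 0) * (x k - c k))
      = (-4*(p+1:ℝ)*a * ((Qf c x) ^ (p+2))⁻¹) * (x j - c j) := by
    rw [← Finset.mul_sum]
    congr 1
    simp [ite_mul, Finset.sum_ite_eq]
  have s2 : ∑ k : Fin N, (-(2*(p+1:ℝ)*a) * (x j - c j) * ((Qf c x) ^ (p+2))⁻¹
      + (4*(p+1:ℝ)*(p+2)*a*(x j - c j) * ((Qf c x) ^ (p+3))⁻¹) * (x k - c k)^2)
      = (N : ℝ) * (-(2*(p+1:ℝ)*a) * (x j - c j) * ((Qf c x) ^ (p+2))⁻¹)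
        + (4*(p+1:ℝ)*(p+2)*a*(x j - c j) * ((Qf c x) ^ (p+3))⁻¹) * Qf c x := by
    rw [Finset.sum_add_distrib, Finset.sum_const, ← Finset.mul_sum]
    simp [Qf, nsmul_eq_mul]
  rw [s1, s2]
  field_simp
  ring

lemma pderiv'_congr {m : ℕ} {f g : (Fin m → ℝ) → ℝ} {x : Fin m → ℝ}
    (hfg : f =ᶠ[nhds x] g) (i : Fin m) : pderiv' i f =ᶠ[nhds x] pderiv' i g := by
  have h2 : ∀ᶠ y in nhds x, f =ᶠ[nhds y] g := hfg.eventually_nhds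
  filter_upwards [h2] with y hy
  simp only [pderiv', Filter.EventuallyEq.fderiv_eq (𝕜 := ℝ) hy]

lemma laplacian'_congr {m : ℕ} {f g : (Fin m → ℝ) → ℝ} {x : Fin m → ℝ}
    (hfg : f =ᶠ[nhds x] g) : laplacian' f =ᶠ[nhds x] laplacian' g := by
  have h : ∀ᶠ y in nhds x, ∀ i : Fin m, pderiv' i (pderiv' i f) y = pderiv' i (pderiv' i g) y :=
    Filter.eventually_all.2 fun i => pderiv'_congr (pderiv'_congr hfg i) i
  filter_upwards [h] with y hy
  exact Finset.sum_congr rfl fun i _ => hy i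

lemma iter_F (c : Fin N → ℝ) (j : Fin N) (a : ℝ) (h : ℕ) :
    ∀ x, Qf c x ≠ 0 → laplacian'^[h] (fun y => a * ((y j - c j) * ((Qf c y) ^ (0+1))⁻¹)) x
      = ((∏ p ∈ Finset.range h, (2*(p+1:ℝ)*(2*(p+1) - N))) * a)
          * ((x j - c j) * ((Qf c x) ^ (h+1))⁻¹) := by
  induction h with
  | zero => intro x hx; simp
  | succ h ih =>
    intro x hx
    rw [Function.iterate_succ_apply']
    have hmem : {y : Fin N → ℝ | Qf c y ≠ 0} ∈ nhds x := (isOpen_U c).mem_nhds hx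
    have hEv : laplacian'^[h] (fun y => a * ((y j - c j) * ((Qf c y) ^ (0+1))⁻¹))
        =ᶠ[nhds x] fun y => ((∏ p ∈ Finset.range h, (2*(p+1:ℝ)*(2*(p+1) - N))) * a)
          * ((y j - c j) * ((Qf c y) ^ (h+1))⁻¹) := by
      filter_upwards [hmem] with y hy
      exact ih y hy
    have := (laplacian'_congr hEv).eq_of_nhds
    rw [this, laplacian_F c x j h _ hx, Finset.prod_range_succ]
    push_cast
    ring

lemma sum_sq_ne_zero {c x : Fin N → ℝ} (hx : x ≠ c) : Qf c x ≠ 0 := by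
  intro h0
  apply hx
  funext i
  have := (Finset.sum_eq_zero_iff_of_nonneg (fun i _ => sq_nonneg (x i - c i))).1 h0 i
    (Finset.mem_univ i)
  have := pow_eq_zero_iff (n := 2) (by norm_num) |>.1 this
  linarith [this]

/-- For `s ∈ ℝ`, `h ∈ ℕ` and `Q(x) = (s - x₀)² + Σ_{i=1}^n x_i²`, on
`U = {x ∈ ℝ^{n+1} : x ≠ (s,0,…,0)}` the `h`-fold iterated Laplacian satisfies
`Δ^h[(s - x₀)Q(x)⁻¹] = C_{n,h}(s - x₀)Q(x)^{-(h+1)}` and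
`Δ^h[x_j Q(x)⁻¹] = C_{n,h} x_j Q(x)^{-(h+1)}` for `j = 1,…,n`, where
`C_{n,h} = (-1)^h ∏_{ℓ=1}^h (2ℓ) ∏_{ℓ=1}^h (n - (2ℓ-1))`. These are the components of
`Δ^h S_L^{-1}(s,x) = C_{n,h}(s - x̄)(s² - 2Re(x)s + |x|²)^{-(h+1)}` for real `s`. -/
theorem iterated_laplacian_cauchy_kernel (n : ℕ) (hn : 1 ≤ n) (s : ℝ) (h : ℕ) :
    let Q : (Fin (n + 1) → ℝ) → ℝ :=
      fun x => (s - x 0) ^ 2 + ∑ i ∈ Finset.univ.erase 0, x i ^ 2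
    let C : ℝ := (-1 : ℝ) ^ h * (∏ ℓ ∈ Finset.Icc 1 h, (2 * ℓ : ℝ)) *
      ∏ ℓ ∈ Finset.Icc 1 h, ((n : ℝ) - (2 * ℓ - 1))
    ∀ x : Fin (n + 1) → ℝ, x ≠ Pi.single 0 s →
      (laplacian'^[h] (fun y => (s - y 0) * (Q y)⁻¹) x
          = C * (s - x 0) * ((Q x) ^ (h + 1))⁻¹) ∧
      (∀ j : Fin (n + 1), j ≠ 0 →
        laplacian'^[h] (fun y => y j * (Q y)⁻¹) x
          = C * x j * ((Q x) ^ (h + 1))⁻¹) := by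
  intro Q C x hxne
  set c : Fin (n+1) → ℝ := Pi.single 0 s with hc
  have hQ : ∀ y, Q y = Qf c y := by
    intro y
    rw [Qf, ← Finset.add_sum_erase Finset.univ _ (Finset.mem_univ (0 : Fin (n+1)))]
    simp only [Q]
    congr 1
    · simp [hc, Pi.single_eq_same]; ring
    · apply Finset.sum_congr rfl
      intro i hi
      have : i ≠ 0 := (Finset.mem_erase.1 hi).1
      simp [hc, Pi.single_eq_of_ne this]
  have hx : Qf c x ≠ 0 := sum_sq_ne_zero hxne
  -- constant identity
  have hprodIcc : ∀ (f : ℕ → ℝ), ∏ ℓ ∈ Finset.Icc 1 h, f ℓ = ∏ p ∈ Finset.range h, f (p+1) := by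
    intro f
    rw [← Finset.Ico_add_one_right_eq_Icc, Finset.prod_Ico_eq_prod_range]
    simp [add_comm]
  have hC : C = ∏ p ∈ Finset.range h, (2*(p+1:ℝ)*(2*(p+1) - (n+1 : ℕ))) := by
    simp only [C, hprodIcc]
    rw [show ((-1 : ℝ)) ^ h = ∏ p ∈ Finset.range h, (-1 : ℝ) by simp]
    rw [← Finset.prod_mul_distrib, ← Finset.prod_mul_distrib]
    apply Finset.prod_congr rfl
    intro p _
    push_cast
    ring
  constructor
  · have hfun : (fun y => (s - y 0) * (Q y)⁻¹)
        = fun y => (-1 : ℝ) * ((y 0 - c 0) * ((Qf c y) ^ (0+1))⁻¹) := by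
      funext y
      rw [hQ]
      simp [hc, Pi.single_eq_same]
      ring
    rw [hfun, iter_F c 0 (-1) h x hx, hQ, hC]
    simp [hc, Pi.single_eq_same]
    ring
  · intro j hj
    have hfun : (fun y : Fin (n+1) → ℝ => y j * (Q y)⁻¹)
        = fun y => (1 : ℝ) * ((y j - c j) * ((Qf c y) ^ (0+1))⁻¹) := by
      funext y
      rw [hQ]
      simp [hc, Pi.single_eq_of_ne hj]
    rw [hfun, iter_F c j 1 h x hx, hQ, hC]
    simp only [hc, Pi.single_eq_of_ne hj, sub_zero, mul_one]
    ring

end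
end

section
/- Let n ≥ 1, s ∈ ℝ, λ ∈ ℝ, and let U = {x ∈ ℝ^{n+1} : x ≠ (s,0,…,0)}. Set Q(x) = (s - x₀)² + Σ_{i=1}^n x_i² and define f₀(x) = (s - x₀)·Q(x)^{-λ} and f_j(x) = x_j·Q(x)^{-λ} for j = 1,…,n (real powers). Then for every x ∈ U: ∂_{x₀}f_j(x) + ∂_{x_j}f₀(x) = 0 for j = 1,…,n; ∂_{x_i}f_j(x) - ∂_{x_j}f_i(x) = 0 for 1 ≤ i < j ≤ n; and ∂_{x₀}f₀(x) - Σ_{i=1}^n ∂_{x_i}f_i(x) = (2λ - (n+1))·Q(x)^{-λ}. Consequently (f₀,…,f_n) satisfies the Riesz system on U if and only if λ = (n+1)/2. -/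
noncomputable section

open Finset

lemma key (n : ℕ) (s lam : ℝ) (x : Fin (n+1) → ℝ)
    (hx : 0 < (s - x 0) ^ 2 + ∑ i ∈ Finset.univ.erase 0, x i ^ 2) (j k : Fin (n+1)) :
    pderiv' k (fun y => (if j = 0 then s - y 0 else y j) *
      ((s - y 0) ^ 2 + ∑ i ∈ Finset.univ.erase 0, y i ^ 2) ^ (-lam)) x
    = (if j = 0 then (if k = 0 then (-1:ℝ) else 0) else if k = j then 1 else 0) *
        ((s - x 0) ^ 2 + ∑ i ∈ Finset.univ.erase 0, x i ^ 2) ^ (-lam)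
      + (if j = 0 then s - x 0 else x j) *
        ((-lam * ((s - x 0) ^ 2 + ∑ i ∈ Finset.univ.erase 0, x i ^ 2) ^ (-lam - 1)) *
          (if k = 0 then -(2 * (s - x 0)) else 2 * x k)) := by
  set Qx : ℝ := (s - x 0) ^ 2 + ∑ i ∈ Finset.univ.erase 0, x i ^ 2 with hQx
  let P : Fin (n+1) → ((Fin (n+1) → ℝ) →L[ℝ] ℝ) := fun i => ContinuousLinearMap.proj i
  have hP : ∀ i : Fin (n+1), HasFDerivAt (fun y : Fin (n+1) → ℝ => y i) (P i) x :=
    fun i => (P i).hasFDerivAt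
  have h0 : HasFDerivAt (fun y : Fin (n+1) → ℝ => s - y 0) (-(P 0)) x := by
    simpa using (hasFDerivAt_const s x).fun_sub (hP 0)
  have hQ : HasFDerivAt (fun y : Fin (n+1) → ℝ =>
        (s - y 0) ^ 2 + ∑ i ∈ Finset.univ.erase 0, y i ^ 2)
      ((↑(2:ℕ) * (s - x 0) ^ 1) • -(P 0) +
        ∑ i ∈ Finset.univ.erase 0, (↑(2:ℕ) * x i ^ 1) • P i) x := by
    exact ((hasDerivAt_pow 2 (s - x 0)).comp_hasFDerivAt x h0).fun_add
      (HasFDerivAt.fun_sum fun i _ => (hasDerivAt_pow 2 (x i)).comp_hasFDerivAt x (hP i))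
  have hg : HasFDerivAt (fun y : Fin (n+1) → ℝ =>
        ((s - y 0) ^ 2 + ∑ i ∈ Finset.univ.erase 0, y i ^ 2) ^ (-lam))
      ((-lam * Qx ^ (-lam - 1)) •
        ((↑(2:ℕ) * (s - x 0) ^ 1) • -(P 0) +
          ∑ i ∈ Finset.univ.erase 0, (↑(2:ℕ) * x i ^ 1) • P i)) x :=
    hQ.rpow_const (Or.inl hx.ne')
  have hu : HasFDerivAt (fun y : Fin (n+1) → ℝ => if j = 0 then s - y 0 else y j)
      (if j = 0 then -(P 0) else P j) x := by
    by_cases hj : j = 0 <;> simp only [hj, if_true, if_false, ite_true, ite_false]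
    · exact h0
    · exact hP j
  have hf := hu.fun_mul hg
  rw [pderiv', hf.fderiv]
  simp only [ContinuousLinearMap.add_apply, ContinuousLinearMap.smul_apply,
    ContinuousLinearMap.sum_apply, ContinuousLinearMap.neg_apply, smul_eq_mul,
    apply_ite (fun L : (Fin (n+1) → ℝ) →L[ℝ] ℝ => L (Pi.single k 1)),
    P, ContinuousLinearMap.proj_apply]
  clear hf hg hQ hu hP h0
  have hsingle : ∀ i : Fin (n+1), (Pi.single k 1 : Fin (n+1) → ℝ) i = if i = k then 1 else 0 := by
    intro i; rw [Pi.single_apply]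
  simp only [hsingle, mul_ite, mul_one, mul_zero, pow_one, Nat.cast_ofNat]
  have hsum : (∑ i ∈ Finset.univ.erase 0, if i = k then (2:ℝ) * x i else 0)
      = if k = 0 then 0 else 2 * x k := by
    rw [Finset.sum_ite_eq' (Finset.univ.erase 0) k (fun i => ((2:ℝ) * x i))]
    by_cases hk : k = 0 <;> simp [hk]
  rw [hsum]
  rcases eq_or_ne j 0 with hj | hj <;> rcases eq_or_ne k 0 with hk | hk
  · subst hj; subst hk
    simp only [if_pos rfl, if_true, ite_true, if_true, ite_true]; ring
  · subst hj
    simp only [if_pos rfl, if_neg hk, if_neg (Ne.symm hk), if_true, ite_true]; ring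
  · subst hk
    simp only [if_neg hj, if_neg (Ne.symm hj), if_pos rfl, if_true, ite_true, if_true, ite_true]; ring
  · rcases eq_or_ne k j with hkj | hkj
    · subst hkj
      simp only [if_neg hj, if_neg (Ne.symm hj), if_neg hk, if_pos rfl, if_true, ite_true, if_true, ite_true]; ring
    · simp only [if_neg hj, if_neg (Ne.symm hj), if_neg hk, if_neg (Ne.symm hk),
        if_neg hkj, if_neg (Ne.symm hkj), if_true, ite_true]; ring
lemma Qpos (n : ℕ) (s : ℝ) (x : Fin (n+1) → ℝ) (hx : x ≠ Pi.single 0 s) :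
    0 < (s - x 0) ^ 2 + ∑ i ∈ Finset.univ.erase 0, x i ^ 2 := by
  have h1 : (0:ℝ) ≤ (s - x 0) ^ 2 := sq_nonneg _
  have h2 : (0:ℝ) ≤ ∑ i ∈ Finset.univ.erase 0, x i ^ 2 :=
    Finset.sum_nonneg fun i _ => sq_nonneg _
  rcases (add_nonneg h1 h2).lt_or_eq with h | h
  · exact h
  exfalso; apply hx
  have h3 : (s - x 0) ^ 2 = 0 ∧ ∑ i ∈ Finset.univ.erase 0, x i ^ 2 = 0 :=
    (add_eq_zero_iff_of_nonneg h1 h2).mp h.symm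
  have h4 : ∀ i ∈ Finset.univ.erase 0, x i ^ 2 = 0 :=
    (Finset.sum_eq_zero_iff_of_nonneg fun i _ => sq_nonneg _).mp h3.2
  funext i
  by_cases hi : i = 0
  · subst hi
    have := pow_eq_zero_iff (n := 2) (by norm_num) |>.mp h3.1
    have : x 0 = s := by linarith [sub_eq_zero.mp this]
    simp [this]
  · have := pow_eq_zero_iff (n := 2) (by norm_num) |>.mp
      (h4 i (Finset.mem_erase.mpr ⟨hi, Finset.mem_univ i⟩))
    simp [this, Pi.single_apply, hi]
/-- For `s, λ ∈ ℝ`, `Q(x) = (s - x₀)² + Σ_{i=1}^n x_i²`,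
`f₀(x) = (s - x₀)Q(x)^{-λ}` and `f_j(x) = x_j Q(x)^{-λ}` (real powers), on
`U = {x ∈ ℝ^{n+1} : x ≠ (s,0,…,0)}` we have `∂₀f_j + ∂_j f₀ = 0`,
`∂_i f_j - ∂_j f_i = 0` for `1 ≤ i < j ≤ n`, and
`∂₀f₀ - Σ_{i=1}^n ∂_i f_i = (2λ - (n+1))Q^{-λ}`; consequently `(f₀,…,f_n)` satisfies the
Riesz system on `U` iff `λ = (n+1)/2`. -/
theorem riesz_system_rpow_iff_sce_exponent (n : ℕ) (hn : 1 ≤ n) (s lam : ℝ) :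
    let Q : (Fin (n + 1) → ℝ) → ℝ :=
      fun x => (s - x 0) ^ 2 + ∑ i ∈ Finset.univ.erase 0, x i ^ 2
    let f : Fin (n + 1) → (Fin (n + 1) → ℝ) → ℝ :=
      fun j y => (if j = 0 then s - y 0 else y j) * (Q y) ^ (-lam)
    (∀ x : Fin (n + 1) → ℝ, x ≠ Pi.single 0 s →
        (∀ j : Fin (n + 1), j ≠ 0 → pderiv' 0 (f j) x + pderiv' j (f 0) x = 0) ∧
        (∀ i j : Fin (n + 1), i ≠ 0 → j ≠ 0 → i < j →
          pderiv' i (f j) x - pderiv' j (f i) x = 0) ∧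
        (pderiv' 0 (f 0) x - ∑ i ∈ Finset.univ.erase 0, pderiv' i (f i) x
          = (2 * lam - ((n : ℝ) + 1)) * (Q x) ^ (-lam))) ∧
    ((∀ x : Fin (n + 1) → ℝ, x ≠ Pi.single 0 s →
        (pderiv' 0 (f 0) x - ∑ i ∈ Finset.univ.erase 0, pderiv' i (f i) x = 0) ∧
        (∀ j : Fin (n + 1), j ≠ 0 → pderiv' 0 (f j) x + pderiv' j (f 0) x = 0) ∧
        (∀ i j : Fin (n + 1), i ≠ 0 → j ≠ 0 → i < j →
          pderiv' i (f j) x - pderiv' j (f i) x = 0))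
      ↔ lam = ((n : ℝ) + 1) / 2) := by
  intro Q f
  have hmain : ∀ x : Fin (n + 1) → ℝ, x ≠ Pi.single 0 s →
      (∀ j : Fin (n + 1), j ≠ 0 → pderiv' 0 (f j) x + pderiv' j (f 0) x = 0) ∧
      (∀ i j : Fin (n + 1), i ≠ 0 → j ≠ 0 → i < j →
        pderiv' i (f j) x - pderiv' j (f i) x = 0) ∧
      (pderiv' 0 (f 0) x - ∑ i ∈ Finset.univ.erase 0, pderiv' i (f i) x
        = (2 * lam - ((n : ℝ) + 1)) * (Q x) ^ (-lam)) := by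
    intro x hx
    have hQ := Qpos n s x hx
    have hQne : ((s - x 0) ^ 2 + ∑ i ∈ Finset.univ.erase 0, x i ^ 2) ≠ 0 := hQ.ne'
    refine ⟨?_, ?_, ?_⟩
    · intro j hj
      rw [show pderiv' 0 (f j) x = _ from key n s lam x hQ j 0,
        show pderiv' j (f 0) x = _ from key n s lam x hQ 0 j]
      simp only [if_neg hj, if_pos rfl, if_neg (Ne.symm hj), if_true, ite_true]
      ring
    · intro i j hi hj hij
      have hij' : i ≠ j := Fin.ne_of_lt hij
      rw [show pderiv' i (f j) x = _ from key n s lam x hQ j i,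
        show pderiv' j (f i) x = _ from key n s lam x hQ i j]
      simp only [if_neg hj, if_neg hi, if_neg hij', if_neg (Ne.symm hij'), if_true, ite_true]
      ring
    · have hterm : ∀ i ∈ Finset.univ.erase 0, pderiv' i (f i) x =
          1 * ((s - x 0) ^ 2 + ∑ i ∈ Finset.univ.erase 0, x i ^ 2) ^ (-lam)
          + x i * ((-lam * ((s - x 0) ^ 2 + ∑ i ∈ Finset.univ.erase 0, x i ^ 2) ^ (-lam - 1))
            * (2 * x i)) := by
        intro i hi
        have hi0 : i ≠ 0 := Finset.ne_of_mem_erase hi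
        rw [show pderiv' i (f i) x = _ from key n s lam x hQ i i]
        simp only [if_neg hi0, if_pos rfl, if_true, ite_true]
      simp only [Q]
      rw [show pderiv' 0 (f 0) x = _ from key n s lam x hQ 0 0,
        Finset.sum_congr rfl hterm]
      rw [Finset.sum_add_distrib, Finset.sum_const, Finset.card_erase_of_mem (Finset.mem_univ _),
        Finset.card_univ, Fintype.card_fin]
      have hpow : ((s - x 0) ^ 2 + ∑ i ∈ Finset.univ.erase 0, x i ^ 2) ^ (-lam - 1)
          * ((s - x 0) ^ 2 + ∑ i ∈ Finset.univ.erase 0, x i ^ 2)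
          = ((s - x 0) ^ 2 + ∑ i ∈ Finset.univ.erase 0, x i ^ 2) ^ (-lam) := by
        conv_rhs => rw [show (-lam) = (-lam - 1) + 1 by ring]
        rw [Real.rpow_add hQ, Real.rpow_one]
      have hsum2 : ∑ i ∈ Finset.univ.erase 0,
          x i * ((-lam * ((s - x 0) ^ 2 + ∑ i ∈ Finset.univ.erase 0, x i ^ 2) ^ (-lam - 1))
            * (2 * x i))
          = (-lam * ((s - x 0) ^ 2 + ∑ i ∈ Finset.univ.erase 0, x i ^ 2) ^ (-lam - 1))
            * (2 * ∑ i ∈ Finset.univ.erase 0, x i ^ 2) := by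
        simp only [Finset.mul_sum]
        exact Finset.sum_congr rfl fun i _ => by ring
      rw [hsum2]
      simp only [nsmul_eq_mul, if_pos rfl, if_true, ite_true, Nat.add_sub_cancel]
      linear_combination 2 * lam * hpow
  refine ⟨hmain, ⟨fun h => ?_, fun hlam x hx => ?_⟩⟩
  · set y : Fin (n+1) → ℝ := Pi.single 0 (s+1) with hy
    have hne : y ≠ Pi.single 0 s := by
      intro hcontra
      have := congrFun hcontra 0
      simp [hy, Pi.single_eq_same] at this
    have h1 := (h y hne).1
    have h2 := (hmain y hne).2.2
    rw [h1] at h2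
    have hQy : 0 < Q y := Qpos n s y hne
    have hpos : (0:ℝ) < (Q y) ^ (-lam) := Real.rpow_pos_of_pos hQy _
    have := mul_eq_zero.mp h2.symm
    rcases this with h3 | h3
    · linarith
    · exact absurd h3 hpos.ne'
  · obtain ⟨h1, h2, h3⟩ := hmain x hx
    refine ⟨?_, h1, h2⟩
    rw [h3, hlam]; ring

end
end
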